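/- Let L be the left-shift operator on ℓ²(ℕ₀) with L e₀ = 0 and L eₙ₊₁ = eₙ, and let g = Σ_{n≥0} (1/n!) eₙ. Then the Krylov subspace K(L,g) = span{Lᵏg : k ∈ ℕ₀} is dense in ℓ²(ℕ₀). -/

import Mathlib

open Filter Finset

/-- For the left shift `L` on `ℓ²(ℕ₀)` and `g = Σₙ (1/n!) eₙ`, the Krylov subspace
`K(L, g) = span{Lᵏg : k ∈ ℕ₀}` is dense in `ℓ²(ℕ₀)`. -/
theorem stmt2
    (L : lp (fun _ : ℕ => ℂ) 2 →L[ℂ] lp (fun _ : ℕ => ℂ) 2)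
    (hL0 : L (lp.single 2 (0 : ℕ) 1) = 0)
    (hL : ∀ n : ℕ, L (lp.single 2 (n + 1) 1) = lp.single 2 n 1)
    (g : lp (fun _ : ℕ => ℂ) 2)
    (hg : g = ∑' n : ℕ, ((n.factorial : ℂ))⁻¹ • (lp.single 2 n 1 : lp (fun _ : ℕ => ℂ) 2)) :
    Dense ((Submodule.span ℂ (Set.range fun k : ℕ => (L ^ k) g)) : Set (lp (fun _ : ℕ => ℂ) 2)) := by
  classical
  have hnorme : ∀ n : ℕ, ‖(lp.single 2 n 1 : lp (fun _ : ℕ => ℂ) 2)‖ = 1 := by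
    intro n
    have := lp.norm_single (p := 2) (E := fun _ : ℕ => ℂ) (by norm_num) n (1 : ℂ)
    simpa using this
  -- summability of the inverse-factorial series
  have hsumfac : Summable (fun n : ℕ => ((n.factorial : ℝ))⁻¹) := by
    simpa [one_div] using Real.summable_pow_div_factorial 1
  have hsummable : ∀ k : ℕ,
      Summable (fun n : ℕ => (((n + k).factorial : ℂ))⁻¹ • (lp.single 2 n 1 : lp (fun _ : ℕ => ℂ) 2)) := by
    intro k
    apply Summable.of_norm
    have hle : ∀ n : ℕ, ‖(((n + k).factorial : ℂ))⁻¹ • (lp.single 2 n 1 : lp (fun _ : ℕ => ℂ) 2)‖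
        ≤ ((n.factorial : ℝ))⁻¹ := by
      intro n
      rw [norm_smul, hnorme, mul_one, norm_inv, Complex.norm_natCast]
      apply inv_anti₀
      · exact_mod_cast n.factorial_pos
      · exact_mod_cast Nat.factorial_le (Nat.le_add_right n k)
    exact Summable.of_nonneg_of_le (fun n => norm_nonneg _) hle hsumfac
  -- the formula for L^k g
  have key : ∀ k : ℕ,
      HasSum (fun n : ℕ => (((n + k).factorial : ℂ))⁻¹ • (lp.single 2 n 1 : lp (fun _ : ℕ => ℂ) 2)) ((L ^ k) g) := by
    intro k
    induction k with
    | zero =>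
        have h0 := (hsummable 0).hasSum
        have : (L ^ 0) g = ∑' n : ℕ, (((n + 0).factorial : ℂ))⁻¹ • (lp.single 2 n 1 : lp (fun _ : ℕ => ℂ) 2) := by
          simp only [pow_zero, ContinuousLinearMap.one_apply, hg, Nat.add_zero]
        rw [this]
        exact h0
    | succ k ih =>
        have h1 : HasSum (fun n : ℕ => (((n + k).factorial : ℂ))⁻¹ • L (lp.single 2 n 1))
            ((L ^ (k + 1)) g) := by
          have := L.hasSum ih
          simpa [pow_succ', map_smul] using this
        have h3 := (hasSum_nat_add_iff'
          (f := fun n : ℕ => (((n + k).factorial : ℂ))⁻¹ • L (lp.single 2 n 1)) 1).mpr h1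
        simp only [Finset.range_one, Finset.sum_singleton, Nat.zero_add, hL0, smul_zero,
          sub_zero] at h3
        have harr : (fun n : ℕ => (((n + 1 + k).factorial : ℂ))⁻¹ • L (lp.single 2 (n + 1) 1))
            = fun n : ℕ => (((n + (k + 1)).factorial : ℂ))⁻¹ • (lp.single 2 n 1 : lp (fun _ : ℕ => ℂ) 2) := by
          funext n
          rw [hL n, show n + 1 + k = n + (k + 1) from by omega]
        rwa [harr] at h3
  -- the closure of the Krylov subspace
  set M := (Submodule.span ℂ (Set.range fun k : ℕ => (L ^ k) g)).topologicalClosure with hM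
  have hLgM : ∀ k : ℕ, (L ^ k) g ∈ M :=
    fun k => Submodule.le_topologicalClosure _ (Submodule.subset_span ⟨k, rfl⟩)
  -- every basis vector lies in M
  have hsingleM : ∀ m : ℕ, (lp.single 2 m 1 : lp (fun _ : ℕ => ℂ) 2) ∈ M := by
    intro m
    induction m using Nat.strong_induction_on with
    | _ m IH =>
      -- the approximating sequence
      set x : ℕ → lp (fun _ : ℕ => ℂ) 2 := fun k =>
        ((k + m).factorial : ℂ) • (L ^ k) g
          - ∑ j ∈ Finset.range m, (((k + m).factorial : ℂ) / ((j + k).factorial : ℂ))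
              • (lp.single 2 j 1 : lp (fun _ : ℕ => ℂ) 2) with hx
      have hxM : ∀ k : ℕ, x k ∈ M := by
        intro k
        exact sub_mem (M.smul_mem _ (hLgM k))
          (Submodule.sum_mem _ fun j hj => M.smul_mem _ (IH j (Finset.mem_range.mp hj)))
      -- F k : scaled series
      have hF : ∀ k : ℕ, HasSum
          (fun n : ℕ => (((k + m).factorial : ℂ) / ((n + k).factorial : ℂ))
            • (lp.single 2 n 1 : lp (fun _ : ℕ => ℂ) 2))
          (((k + m).factorial : ℂ) • (L ^ k) g) := by
        intro k
        have h := (key k).const_smul (((k + m).factorial : ℂ))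
        have heq : (fun n : ℕ => ((k + m).factorial : ℂ) •
            ((((n + k).factorial : ℂ))⁻¹ • (lp.single 2 n 1 : lp (fun _ : ℕ => ℂ) 2)))
            = fun n : ℕ => (((k + m).factorial : ℂ) / ((n + k).factorial : ℂ))
              • (lp.single 2 n 1 : lp (fun _ : ℕ => ℂ) 2) := by
          funext n
          rw [smul_smul, div_eq_mul_inv]
        rwa [heq] at h
      -- shifted series: x k - e m
      have hshift : ∀ k : ℕ, HasSum
          (fun n : ℕ => (((k + m).factorial : ℂ) / (((n + (m + 1)) + k).factorial : ℂ))
            • (lp.single 2 (n + (m + 1)) 1 : lp (fun _ : ℕ => ℂ) 2))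
          (x k - lp.single 2 m 1) := by
        intro k
        have h := (hasSum_nat_add_iff'
          (f := fun n : ℕ => (((k + m).factorial : ℂ) / ((n + k).factorial : ℂ))
            • (lp.single 2 n 1 : lp (fun _ : ℕ => ℂ) 2)) (m + 1)).mpr (hF k)
        have hFm : (((k + m).factorial : ℂ) / ((m + k).factorial : ℂ))
            • (lp.single 2 m 1 : lp (fun _ : ℕ => ℂ) 2) = lp.single 2 m 1 := by
          rw [show m + k = k + m from Nat.add_comm m k, div_self, one_smul]
          exact_mod_cast (Nat.factorial_pos (k + m)).ne'
        rw [Finset.sum_range_succ, hFm] at h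
        have : ((k + m).factorial : ℂ) • (L ^ k) g
            - (∑ j ∈ Finset.range m, (((k + m).factorial : ℂ) / ((j + k).factorial : ℂ))
                • (lp.single 2 j 1 : lp (fun _ : ℕ => ℂ) 2) + lp.single 2 m 1)
            = x k - lp.single 2 m 1 := by
          rw [hx, sub_add_eq_sub_sub]
        rwa [this] at h
      -- norm bound
      have hnorm : ∀ k : ℕ, 1 ≤ k → ‖x k - lp.single 2 m 1‖ ≤ 2 * (1 / (k + 1) : ℝ) := by
        intro k hk
        have hterm : ∀ n : ℕ,
            ‖(((k + m).factorial : ℂ) / (((n + (m + 1)) + k).factorial : ℂ))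
              • (lp.single 2 (n + (m + 1)) 1 : lp (fun _ : ℕ => ℂ) 2)‖
            ≤ (1 / (k + 1) : ℝ) * (1 / 2) ^ n := by
          intro n
          rw [norm_smul, hnorme, mul_one, norm_div, Complex.norm_natCast, Complex.norm_natCast]
          -- key natural-number inequality
          have hnat : (k + m).factorial * ((k + 1) * 2 ^ n) ≤ ((n + (m + 1)) + k).factorial := by
            have h1 : (k + m).factorial * ((k + m) + 1) ^ (n + 1) ≤ ((k + m) + (n + 1)).factorial :=
              Nat.factorial_mul_pow_le_factorial
            have h2 : (k + 1) * 2 ^ n ≤ ((k + m) + 1) ^ (n + 1) := by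
              have h2a : k + 1 ≤ (k + m) + 1 := by omega
              have h2b : (2 : ℕ) ^ n ≤ ((k + m) + 1) ^ n := Nat.pow_le_pow_left (by omega) n
              calc (k + 1) * 2 ^ n ≤ ((k + m) + 1) * ((k + m) + 1) ^ n :=
                    Nat.mul_le_mul h2a h2b
                _ = ((k + m) + 1) ^ (n + 1) := (pow_succ' _ _).symm
            calc (k + m).factorial * ((k + 1) * 2 ^ n)
                ≤ (k + m).factorial * ((k + m) + 1) ^ (n + 1) :=
                  Nat.mul_le_mul_left _ h2
              _ ≤ ((k + m) + (n + 1)).factorial := h1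
              _ = ((n + (m + 1)) + k).factorial := by congr 1; omega
          have hb : (0 : ℝ) < (((n + (m + 1)) + k).factorial : ℝ) := by
            exact_mod_cast Nat.factorial_pos _
          have hc : (0 : ℝ) < ((k : ℝ) + 1) * 2 ^ n := by positivity
          rw [div_le_iff₀ hb]
          have : (1 / ((k : ℝ) + 1)) * (1 / 2) ^ n
              = (((k : ℝ) + 1) * 2 ^ n)⁻¹ := by
            rw [div_pow, one_div, one_pow, mul_inv, one_div]
          rw [this, inv_mul_eq_div, le_div_iff₀ hc]
          calc ((k + m).factorial : ℝ) * (((k : ℝ) + 1) * 2 ^ n)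
              = (((k + m).factorial * ((k + 1) * 2 ^ n) : ℕ) : ℝ) := by push_cast; ring
            _ ≤ (((n + (m + 1)) + k).factorial : ℝ) := by exact_mod_cast hnat
        have hsb : Summable (fun n : ℕ => (1 / (k + 1) : ℝ) * (1 / 2) ^ n) :=
          (summable_geometric_two).mul_left _
        have hsn : Summable (fun n : ℕ =>
            ‖(((k + m).factorial : ℂ) / (((n + (m + 1)) + k).factorial : ℂ))
              • (lp.single 2 (n + (m + 1)) 1 : lp (fun _ : ℕ => ℂ) 2)‖) :=
          Summable.of_nonneg_of_le (fun n => norm_nonneg _) hterm hsb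
        calc ‖x k - lp.single 2 m 1‖
            = ‖∑' n : ℕ, (((k + m).factorial : ℂ) / (((n + (m + 1)) + k).factorial : ℂ))
                • (lp.single 2 (n + (m + 1)) 1 : lp (fun _ : ℕ => ℂ) 2)‖ := by rw [(hshift k).tsum_eq]
          _ ≤ ∑' n : ℕ, ‖(((k + m).factorial : ℂ) / (((n + (m + 1)) + k).factorial : ℂ))
                • (lp.single 2 (n + (m + 1)) 1 : lp (fun _ : ℕ => ℂ) 2)‖ := norm_tsum_le_tsum_norm hsn
          _ ≤ ∑' n : ℕ, (1 / (k + 1) : ℝ) * (1 / 2) ^ n := Summable.tsum_le_tsum hterm hsn hsb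
          _ = (1 / (k + 1) : ℝ) * ∑' n : ℕ, ((1 : ℝ) / 2) ^ n := by rw [tsum_mul_left]
          _ = (1 / (k + 1) : ℝ) * 2 := by rw [tsum_geometric_two]
          _ = 2 * (1 / (k + 1) : ℝ) := by ring
      -- take the limit
      have htend0 : Tendsto (fun k : ℕ => ‖x k - lp.single 2 m 1‖) atTop (nhds 0) := by
        apply squeeze_zero' (Eventually.of_forall fun k => norm_nonneg _)
          ((eventually_ge_atTop 1).mono fun k hk => hnorm k hk)
        have := (tendsto_one_div_add_atTop_nhds_zero_nat).const_mul (2 : ℝ)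
        simpa using this
      have htend : Tendsto x atTop (nhds (lp.single 2 m 1 : lp (fun _ : ℕ => ℂ) 2)) :=
        tendsto_iff_norm_sub_tendsto_zero.mpr htend0
      exact (Submodule.isClosed_topologicalClosure _).mem_of_tendsto htend
        (Eventually.of_forall hxM)
  -- every element of H lies in M
  have hall : ∀ f : lp (fun _ : ℕ => ℂ) 2, f ∈ M := by
    intro f
    have hs : HasSum (fun i : ℕ => (lp.single 2 i (f i) : lp (fun _ : ℕ => ℂ) 2)) f :=
      lp.hasSum_single (by norm_num) f
    have hmem : ∀ s : Finset ℕ, (∑ i ∈ s, (lp.single 2 i (f i) : lp (fun _ : ℕ => ℂ) 2)) ∈ M := by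
      intro s
      apply Submodule.sum_mem
      intro i _
      have : (lp.single 2 i (f i) : lp (fun _ : ℕ => ℂ) 2) = f i • lp.single 2 i 1 := by
        rw [← lp.single_smul, smul_eq_mul, mul_one]
      rw [this]
      exact M.smul_mem _ (hsingleM i)
    exact (Submodule.isClosed_topologicalClosure _).mem_of_tendsto hs
      (Eventually.of_forall hmem)
  -- conclude
  rw [dense_iff_closure_eq]
  apply Set.eq_univ_of_forall
  intro f
  rw [← Submodule.topologicalClosure_coe]
  exact hall f
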